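/- If X is a directed Archimedean partially ordered vector space, then every net catching element of X is an order unit. -/

import Mathlib

/-- A net decreases to `x`: antitone with infimum `x`. -/
def DecrTo {ι X : Type*} [Preorder ι] [Preorder X] (f : ι → X) (x : X) : Prop :=
  Antitone f ∧ IsGLB (Set.range f) x

/-- `y` is a net catching element. -/
def NetCatchingElem {X : Type*} [Preorder X] [Zero X] (y : X) : Prop :=
  ∀ (ι : Type) [Preorder ι], Nonempty ι → Directed (· ≤ ·) (id : ι → ι) →
    ∀ f : ι → X, DecrTo f (0 : X) → ∃ α : ι, f α ≤ y

/-- `u ∈ X₊` is an order unit. -/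
def OrderUnit {X : Type*} [AddCommMonoid X] [PartialOrder X] (u : X) : Prop :=
  0 ≤ u ∧ ∀ x : X, ∃ n : ℕ, x ≤ n • u

/-- In a directed Archimedean partially ordered vector space, every net
catching element is an order unit. -/
theorem stmt4 {X : Type*} [AddCommGroup X] [PartialOrder X] [IsOrderedAddMonoid X] [Module ℝ X] [PosSMulStrictMono ℝ X] [PosSMulReflectLT ℝ X]
    (hdir : ∀ x y : X, ∃ z : X, x ≤ z ∧ y ≤ z)
    (harch : ∀ x y : X, (∀ n : ℕ, n • x ≤ y) → x ≤ 0)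
    (y : X) (hy : NetCatchingElem y) : OrderUnit y := by
  have hdirN : Directed (· ≤ ·) (id : ℕ → ℕ) := fun a b =>
    ⟨max a b, le_max_left a b, le_max_right a b⟩
  constructor
  · -- 0 ≤ y via the constant-zero net
    obtain ⟨n, hn⟩ := hy ℕ ⟨0⟩ hdirN (fun _ => (0 : X))
      ⟨fun _ _ _ => le_rfl, by
        constructor
        · rintro w ⟨n, rfl⟩; exact le_rfl
        · intro w hw; exact hw ⟨0, rfl⟩⟩
    exact hn
  · intro x
    obtain ⟨z, hxz, hz0⟩ := hdir x 0
    set f : ℕ → X := fun n => (1 / (n + 1) : ℝ) • z with hf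
    have hfpos : ∀ n : ℕ, (0 : ℝ) < 1 / (n + 1) := fun n => by positivity
    have hanti : Antitone f := by
      intro m n hmn
      apply smul_le_smul_of_nonneg_right _ hz0
      apply one_div_le_one_div_of_le
      · positivity
      · exact_mod_cast Nat.add_le_add_right hmn 1
    have hglb : IsGLB (Set.range f) (0 : X) := by
      constructor
      · rintro w ⟨n, rfl⟩
        exact smul_nonneg (hfpos n).le hz0
      · intro w hw
        apply harch w z
        intro n
        match n with
        | 0 => simpa using hz0
        | Nat.succ m =>
          have h1 : w ≤ (1 / (m + 1) : ℝ) • z := hw ⟨m, rfl⟩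
          have h2 : ((m + 1 : ℕ) : ℝ) • w ≤ ((m + 1 : ℕ) : ℝ) • ((1 / (m + 1) : ℝ) • z) :=
            smul_le_smul_of_nonneg_left h1 (by positivity)
          have h3 : ((m + 1 : ℕ) : ℝ) • ((1 / (m + 1) : ℝ) • z) = z := by
            rw [smul_smul]
            push_cast
            rw [mul_one_div, div_self (by positivity), one_smul]
          rw [h3] at h2
          rw [← Nat.cast_smul_eq_nsmul ℝ]
          exact_mod_cast h2
    obtain ⟨n, hn⟩ := hy ℕ ⟨0⟩ hdirN f ⟨hanti, hglb⟩
    refine ⟨n + 1, hxz.trans ?_⟩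
    have h2 : ((n + 1 : ℕ) : ℝ) • ((1 / (n + 1) : ℝ) • z) ≤ ((n + 1 : ℕ) : ℝ) • y :=
      smul_le_smul_of_nonneg_left hn (by positivity)
    have h3 : ((n + 1 : ℕ) : ℝ) • ((1 / (n + 1) : ℝ) • z) = z := by
      rw [smul_smul]
      push_cast
      rw [mul_one_div, div_self (by positivity), one_smul]
    rw [h3, Nat.cast_smul_eq_nsmul] at h2
    exact h2
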